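/- Let ρ : Finset V → ℝ be monotone submodular with ρ(∅) = 0, and let Φ* achieve the maximum of ρ over subsets of size q. If a sequence of sets Φ₀ = ∅ ⊆ Φ₁ ⊆ … ⊆ Φ_q with |Φ_k| = k satisfies the greedy gain condition ρ(Φ_{k+1}) − ρ(Φ_k) ≥ (1/q)(ρ(Φ*) − ρ(Φ_k)) for every k, then ρ(Φ_q) ≥ (1 − 1/e)·ρ(Φ*). -/
import Mathlib


/-- Nemhauser–Wolsey–Fisher greedy guarantee: ρ(Φ_q) ≥ (1 − 1/e)·ρ(Φ*). -/
theorem greedy_guarantee {V : Type*} [Fintype V] [DecidableEq V]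
    (ρ : Finset V → ℝ) (hnorm : ρ ∅ = 0)
    (hmono : ∀ S T : Finset V, S ⊆ T → ρ S ≤ ρ T)
    (hsub : ∀ S T : Finset V, S ⊆ T → ∀ e ∉ T,
      ρ (insert e S) - ρ S ≥ ρ (insert e T) - ρ T)
    (q : ℕ) (hq : 1 ≤ q)
    (Φstar : Finset V) (hcard : Φstar.card = q)
    (hopt : ∀ S : Finset V, S.card = q → ρ S ≤ ρ Φstar)
    (Φ : ℕ → Finset V) (h0 : Φ 0 = ∅)
    (hchain : ∀ k < q, Φ k ⊆ Φ (k + 1))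
    (hΦcard : ∀ k ≤ q, (Φ k).card = k)
    (hgain : ∀ k < q, ρ (Φ (k + 1)) - ρ (Φ k) ≥ (1 / q) * (ρ Φstar - ρ (Φ k))) :
    ρ (Φ q) ≥ (1 - 1 / Real.exp 1) * ρ Φstar := by
  have hq0 : (0:ℝ) < q := by exact_mod_cast Nat.lt_of_lt_of_le Nat.zero_lt_one hq
  have hstar0 : 0 ≤ ρ Φstar := by
    have := hmono ∅ Φstar (Finset.empty_subset _)
    linarith [hnorm ▸ this]
  -- main recursion
  have key : ∀ k ≤ q, ρ Φstar - ρ (Φ k) ≤ (1 - 1/q)^k * ρ Φstar := by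
    intro k hk
    induction k with
    | zero => simp [h0, hnorm]
    | succ n ih =>
      have hn : n < q := Nat.lt_of_succ_le hk
      have ihn := ih (Nat.le_of_lt hn)
      have hg := hgain n hn
      have h1 : ρ Φstar - ρ (Φ (n+1)) ≤ (1 - 1/q) * (ρ Φstar - ρ (Φ n)) := by
        ring_nf
        ring_nf at hg
        linarith
      calc ρ Φstar - ρ (Φ (n+1)) ≤ (1 - 1/q) * (ρ Φstar - ρ (Φ n)) := h1
        _ ≤ (1 - 1/q) * ((1 - 1/q)^n * ρ Φstar) := by
            apply mul_le_mul_of_nonneg_left ihn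
            have : (1:ℝ)/q ≤ 1 := by
              rw [div_le_one hq0]; exact_mod_cast hq
            linarith
        _ = (1 - 1/q)^(n+1) * ρ Φstar := by ring
  have hpow : (1 - 1/(q:ℝ))^q ≤ 1 / Real.exp 1 := by
    have h1 : (1:ℝ) - 1/q ≤ Real.exp (-(1/q)) := by
      have := Real.add_one_le_exp (-(1/(q:ℝ)))
      linarith
    have hnn : (0:ℝ) ≤ 1 - 1/q := by
      have : (1:ℝ)/q ≤ 1 := by rw [div_le_one hq0]; exact_mod_cast hq
      linarith
    calc (1 - 1/(q:ℝ))^q ≤ (Real.exp (-(1/q)))^q := by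
          exact pow_le_pow_left₀ hnn h1 q
      _ = Real.exp (-(1/q) * q) := by rw [← Real.exp_nat_mul]; ring_nf
      _ = Real.exp (-1) := by
          congr 1
          field_simp
      _ = 1 / Real.exp 1 := by rw [Real.exp_neg, one_div]
  have hk := key q le_rfl
  have : ρ Φstar - ρ (Φ q) ≤ (1/Real.exp 1) * ρ Φstar := by
    calc ρ Φstar - ρ (Φ q) ≤ (1 - 1/q)^q * ρ Φstar := hk
      _ ≤ (1/Real.exp 1) * ρ Φstar := mul_le_mul_of_nonneg_right hpow hstar0
  linarith
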